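/- (Bakhvalov's trick) Let q, n ∈ ℕ, and let (G_j)_{j=1,…,2n} be an independent family of random variables each uniformly distributed on D^(q) = {k/2^q + 1/2^(q+1) : 0 ≤ k < 2^q}. Define H_{(j1,j2)} = G_{j1} + G_{j2+n} + 2^{-(q+1)} mod 1 for j1, j2 ∈ {1,…,n}. Then the family (H_{(j1,j2)})_{j1,j2=1,…,n} of n² random variables is pairwise independent and each H_{(j1,j2)} is uniformly distributed on D^(q). -/

import Mathlib

open ProbabilityTheory

/-- The set `D^(q)` of dyadic midpoints `{k/2^q + 1/2^(q+1) : k = 0,…,2^q − 1}`. -/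
noncomputable def Dq (q : ℕ) : Finset ℝ :=
  (Finset.range (2 ^ q)).image (fun k : ℕ => (k : ℝ) / 2 ^ q + 1 / 2 ^ (q + 1))

open MeasureTheory
open scoped ENNReal

noncomputable def Bakh.iota (q k : ℕ) : ℝ := (k : ℝ) / 2 ^ q + 1 / 2 ^ (q + 1)

namespace Bakh

section arith

lemma iota_injective (q : ℕ) : Function.Injective (iota q) := by
  intro k k' h
  have h2 : (0:ℝ) < 2 ^ q := by positivity
  unfold iota at h
  have : (k : ℝ) = k' := by
    field_simp at h
    exact mul_right_cancel₀ (pow_ne_zero (q+1) (two_ne_zero (α := ℝ))) (by linear_combination h)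
  exact_mod_cast this

lemma iota_mem_Dq {q k : ℕ} (hk : k < 2 ^ q) : iota q k ∈ Dq q :=
  Finset.mem_image.2 ⟨k, Finset.mem_range.2 hk, rfl⟩

lemma mem_Dq_iff {q : ℕ} {d : ℝ} : d ∈ Dq q ↔ ∃ k, k < 2 ^ q ∧ iota q k = d := by
  simp [Dq, iota, Finset.mem_image]

def gg (q m k : ℕ) : ℕ := (m + 2 ^ q - 1 - k) % 2 ^ q

lemma gg_lt (q m k : ℕ) : gg q m k < 2 ^ q :=
  Nat.mod_lt _ (Nat.pow_pos (by norm_num))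

lemma gg_spec {q m k : ℕ} (hk : k < 2 ^ q) (hm : m < 2 ^ q) :
    (k + gg q m k + 1) % 2 ^ q = m := by
  have hpos : 0 < 2 ^ q := Nat.pow_pos (by norm_num)
  have h1 : k + (m + 2 ^ q - 1 - k) + 1 = m + 2 ^ q := by omega
  have h2 : (k + gg q m k + 1) ≡ (k + (m + 2 ^ q - 1 - k) + 1) [MOD 2 ^ q] :=
    ((Nat.mod_modEq _ _).add_left k).add_right 1
  calc (k + gg q m k + 1) % 2 ^ q = (m + 2 ^ q) % 2 ^ q := by rw [h2]; rw [h1]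
    _ = m := by rw [Nat.add_mod_right]; exact Nat.mod_eq_of_lt hm

lemma gg_unique {q m k k2 : ℕ} (hk : k < 2 ^ q) (hm : m < 2 ^ q) (hk2 : k2 < 2 ^ q)
    (h : (k + k2 + 1) % 2 ^ q = m) : k2 = gg q m k := by
  have h1 : (k + k2 + 1) ≡ (k + gg q m k + 1) [MOD 2 ^ q] := by
    unfold Nat.ModEq; rw [h, gg_spec hk hm]
  have h2 : k2 ≡ gg q m k [MOD 2 ^ q] :=
    Nat.ModEq.add_left_cancel' k (Nat.ModEq.add_right_cancel' 1 h1)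
  exact h2.eq_of_lt_of_lt hk2 (gg_lt q m k)

lemma fract_iota (q k1 k2 : ℕ) :
    Int.fract (iota q k1 + iota q k2 + 1 / 2 ^ (q + 1))
      = iota q ((k1 + k2 + 1) % 2 ^ q) := by
  have hN : (0:ℝ) < 2 ^ q := by positivity
  set t := (k1 + k2 + 1) / 2 ^ q with ht
  set r := (k1 + k2 + 1) % 2 ^ q with hr
  have hdm : 2 ^ q * t + r = k1 + k2 + 1 := Nat.div_add_mod _ _
  have hrlt : r < 2 ^ q := Nat.mod_lt _ (Nat.pow_pos (by norm_num))
  have hcast : (k1 : ℝ) + k2 + 1 = 2 ^ q * t + r := by exact_mod_cast hdm.symm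
  have e1 : iota q k1 + iota q k2 + 1 / 2 ^ (q + 1)
      = ((k1:ℝ) + k2 + 1) / 2 ^ q + 1 / 2 ^ (q + 1) := by
    unfold iota; rw [pow_succ]; field_simp; ring
  have e2 : ((k1:ℝ) + k2 + 1) / 2 ^ q = (t:ℝ) + (r:ℝ) / 2 ^ q := by
    rw [hcast]; field_simp
  rw [e1, e2, add_assoc]
  rw [show ((t : ℝ)) = ((t : ℤ) : ℝ) by push_cast; ring, Int.fract_intCast_add]
  apply Int.fract_eq_self.2
  refine ⟨by positivity, ?_⟩
  show (r:ℝ) / 2 ^ q + 1 / 2 ^ (q + 1) < 1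
  have hr' : (r : ℝ) + 1 ≤ 2 ^ q := by exact_mod_cast hrlt
  rw [pow_succ, div_add_div _ _ (ne_of_gt hN) (by positivity), div_lt_one (by positivity)]
  nlinarith


end arith

section prob

variable {Ω : Type*} [MeasurableSpace Ω] {P : MeasureTheory.Measure Ω} {ι : Type*}
  {G : ι → Ω → ℝ}
  (hindep : iIndepFun (m := fun _ => (inferInstance : MeasurableSpace ℝ)) G P)

include hindep

lemma hprod (S : Finset ι) (v : ι → ℝ) :
    P (⋂ j ∈ S, G j ⁻¹' {v j}) = ∏ j ∈ S, P (G j ⁻¹' {v j}) :=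
  hindep.measure_inter_preimage_eq_mul S (fun _ _ => measurableSet_singleton _)

lemma pair {x y : ι} (hxy : x ≠ y) (u v : ℝ) :
    P (G x ⁻¹' {u} ∩ G y ⁻¹' {v}) = P (G x ⁻¹' {u}) * P (G y ⁻¹' {v}) := by
  classical
  have h := hprod hindep {x, y} (fun j => if j = x then u else v)
  rw [Finset.set_biInter_insert, Finset.set_biInter_singleton,
    Finset.prod_insert (Finset.notMem_singleton.2 hxy), Finset.prod_singleton,
    if_pos rfl, if_neg (Ne.symm hxy)] at h
  exact h

lemma triple {x y z : ι} (hxy : x ≠ y) (hxz : x ≠ z) (hyz : y ≠ z) (u v w : ℝ) :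
    P (G x ⁻¹' {u} ∩ G y ⁻¹' {v} ∩ G z ⁻¹' {w})
      = P (G x ⁻¹' {u}) * P (G y ⁻¹' {v}) * P (G z ⁻¹' {w}) := by
  classical
  have h := hprod hindep {x, y, z} (fun j => if j = x then u else if j = y then v else w)
  rw [Finset.set_biInter_insert, Finset.set_biInter_insert, Finset.set_biInter_singleton,
    Finset.prod_insert (by simp [hxy, hxz]), Finset.prod_insert (by simp [hyz]),
    Finset.prod_singleton, if_pos rfl, if_neg (Ne.symm hxy), if_pos rfl,
    if_neg (Ne.symm hxz), if_neg (Ne.symm hyz)] at h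
  rw [Set.inter_assoc, h]; ring

lemma quad {x y z w : ι} (hxy : x ≠ y) (hxz : x ≠ z) (hxw : x ≠ w) (hyz : y ≠ z)
    (hyw : y ≠ w) (hzw : z ≠ w) (u v s t : ℝ) :
    P (G x ⁻¹' {u} ∩ G y ⁻¹' {v} ∩ G z ⁻¹' {s} ∩ G w ⁻¹' {t})
      = P (G x ⁻¹' {u}) * P (G y ⁻¹' {v}) * P (G z ⁻¹' {s}) * P (G w ⁻¹' {t}) := by
  classical
  have h := hprod hindep {x, y, z, w}
    (fun j => if j = x then u else if j = y then v else if j = z then s else t)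
  rw [Finset.set_biInter_insert, Finset.set_biInter_insert, Finset.set_biInter_insert,
    Finset.set_biInter_singleton,
    Finset.prod_insert (by simp [hxy, hxz, hxw]), Finset.prod_insert (by simp [hyz, hyw]),
    Finset.prod_insert (by simp [hzw]), Finset.prod_singleton,
    if_pos rfl, if_neg (Ne.symm hxy), if_pos rfl, if_neg (Ne.symm hxz),
    if_neg (Ne.symm hyz), if_pos rfl, if_neg (Ne.symm hxw), if_neg (Ne.symm hyw),
    if_neg (Ne.symm hzw)] at h
  rw [Set.inter_assoc, Set.inter_assoc, h]; ring


end prob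

section prob2

lemma hNc (q : ℕ) : ((2:ℝ≥0∞) ^ q) * (1 / 2 ^ q) = 1 := by
  rw [one_div, ENNReal.mul_inv_cancel (pow_ne_zero q two_ne_zero)
    (ENNReal.pow_ne_top ENNReal.ofNat_ne_top)]

def Bset (q : ℕ) {Ω ι : Type*} (G : ι → Ω → ℝ) : Set Ω :=
  ⋂ j, ⋃ k ∈ Finset.range (2 ^ q), G j ⁻¹' {iota q k}

variable {Ω : Type*} [MeasurableSpace Ω] {P : MeasureTheory.Measure Ω}
  [IsProbabilityMeasure P] {ι : Type*} [Countable ι]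
  {G : ι → Ω → ℝ} {q : ℕ}
  (hGmeas : ∀ j, Measurable (G j))
  (hunif' : ∀ j k, k < 2 ^ q → P (G j ⁻¹' {iota q k}) = 1 / 2 ^ q)
  (hindep : iIndepFun (m := fun _ => (inferInstance : MeasurableSpace ℝ)) G P)

lemma Edisj (j : ι) {k k' : ℕ} (hkk' : k ≠ k') :
    Disjoint (G j ⁻¹' {iota q k}) (G j ⁻¹' {iota q k'}) :=
  (Set.disjoint_singleton.2 fun h => hkk' (iota_injective q h)).preimage (G j)

include hGmeas in
lemma hBmeas : MeasurableSet (Bset q G) :=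
  MeasurableSet.iInter fun j => (Finset.range (2 ^ q)).measurableSet_biUnion
    fun k _ => hGmeas j (measurableSet_singleton _)

include hGmeas hunif' in
lemma hBc : P (Bset q G)ᶜ = 0 := by
  rw [Bset, Set.compl_iInter]
  refine measure_iUnion_null fun j => ?_
  have hm : ∀ k ∈ Finset.range (2 ^ q), MeasurableSet (G j ⁻¹' {iota q k}) :=
    fun k _ => hGmeas j (measurableSet_singleton _)
  have hd : ∀ k ∈ Finset.range (2 ^ q), ∀ k' ∈ Finset.range (2 ^ q), k ≠ k' →
      Disjoint (G j ⁻¹' {iota q k}) (G j ⁻¹' {iota q k'}) :=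
    fun k _ k' _ hkk' => Edisj j hkk'
  have hcov : P (⋃ k ∈ Finset.range (2 ^ q), G j ⁻¹' {iota q k}) = 1 := by
    rw [measure_biUnion_finset hd hm,
      Finset.sum_congr rfl (fun k hk => hunif' j k (Finset.mem_range.1 hk)),
      Finset.sum_const, Finset.card_range, nsmul_eq_mul, Nat.cast_pow, Nat.cast_ofNat, hNc]
  have hmeas : MeasurableSet (⋃ k ∈ Finset.range (2 ^ q), G j ⁻¹' {iota q k}) :=
    (Finset.range (2 ^ q)).measurableSet_biUnion hm
  rw [measure_compl hmeas (measure_ne_top P _), hcov, measure_univ, tsub_self]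

include hGmeas hunif' in
lemma hPB (A : Set Ω) : P (A ∩ Bset q G) = P A := by
  refine le_antisymm (measure_mono Set.inter_subset_left) ?_
  have h2 : P (A ∩ (Bset q G)ᶜ) = 0 :=
    le_antisymm (le_trans (measure_mono Set.inter_subset_right) (hBc hGmeas hunif').le)
      zero_le
  calc P A = P ((A ∩ Bset q G) ∪ (A ∩ (Bset q G)ᶜ)) := by
        rw [Set.inter_union_compl]
    _ ≤ P (A ∩ Bset q G) + P (A ∩ (Bset q G)ᶜ) := measure_union_le _ _
    _ = P (A ∩ Bset q G) := by rw [h2, add_zero]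

lemma hval {ω : Ω} (hω : ω ∈ Bset q G) (j : ι) : ∃ k, k < 2 ^ q ∧ G j ω = iota q k := by
  have := Set.mem_iInter.1 hω j
  simp only [Set.mem_iUnion, Finset.mem_range, Set.mem_preimage,
    Set.mem_singleton_iff] at this
  obtain ⟨k, hk, h⟩ := this; exact ⟨k, hk, h⟩

include hGmeas hunif' hindep in
lemma core1 {x y : ι} (hxy : x ≠ y) {m : ℕ} (hm : m < 2 ^ q) :
    P {ω | Int.fract (G x ω + G y ω + 1 / 2 ^ (q + 1)) = iota q m} = 1 / 2 ^ q := by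
  set A := {ω | Int.fract (G x ω + G y ω + 1 / 2 ^ (q + 1)) = iota q m} with hA
  have hdec : A ∩ Bset q G = ⋃ k ∈ Finset.range (2 ^ q),
      ((G x ⁻¹' {iota q k} ∩ G y ⁻¹' {iota q (gg q m k)}) ∩ Bset q G) := by
    ext ω
    simp only [Set.mem_inter_iff, Set.mem_iUnion, Finset.mem_range, Set.mem_preimage,
      Set.mem_singleton_iff, hA, Set.mem_setOf_eq]
    constructor
    · rintro ⟨hAω, hB⟩
      obtain ⟨k1, hk1, hg1⟩ := hval hB x
      obtain ⟨k2, hk2, hg2⟩ := hval hB y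
      have hfr : Int.fract (G x ω + G y ω + 1 / 2 ^ (q + 1))
          = iota q ((k1 + k2 + 1) % 2 ^ q) := by rw [hg1, hg2]; exact fract_iota q k1 k2
      have hmm : (k1 + k2 + 1) % 2 ^ q = m := iota_injective q (hfr.symm.trans hAω)
      exact ⟨k1, hk1, ⟨hg1, by rw [← gg_unique hk1 hm hk2 hmm]; exact hg2⟩, hB⟩
    · rintro ⟨k, hk, ⟨h1, h2⟩, hB⟩
      refine ⟨?_, hB⟩
      rw [h1, h2, fract_iota, gg_spec hk hm]
  have hd : ∀ k ∈ Finset.range (2^q), ∀ k' ∈ Finset.range (2^q), k ≠ k' →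
      Disjoint ((G x ⁻¹' {iota q k} ∩ G y ⁻¹' {iota q (gg q m k)}) ∩ Bset q G)
        ((G x ⁻¹' {iota q k'} ∩ G y ⁻¹' {iota q (gg q m k')}) ∩ Bset q G) :=
    fun k _ k' _ hkk' => ((Edisj x hkk').mono
      (Set.inter_subset_left.trans Set.inter_subset_left)
      (Set.inter_subset_left.trans Set.inter_subset_left))
  have hmeas : ∀ k ∈ Finset.range (2^q),
      MeasurableSet ((G x ⁻¹' {iota q k} ∩ G y ⁻¹' {iota q (gg q m k)}) ∩ Bset q G) :=
    fun k _ => ((hGmeas x (measurableSet_singleton _)).inter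
      (hGmeas y (measurableSet_singleton _))).inter (hBmeas hGmeas)
  rw [← hPB hGmeas hunif' A, hdec, measure_biUnion_finset hd hmeas]
  rw [Finset.sum_congr rfl (fun k hk => by
    rw [hPB hGmeas hunif', pair hindep hxy, hunif' x k (Finset.mem_range.1 hk),
      hunif' y _ (gg_lt q m k)])]
  rw [Finset.sum_const, Finset.card_range, nsmul_eq_mul, Nat.cast_pow, Nat.cast_ofNat,
    ← mul_assoc, hNc, one_mul]

include hGmeas hunif' hindep in
lemma core2 {x y z : ι} (hxy : x ≠ y) (hxz : x ≠ z) (hyz : y ≠ z) {m m' : ℕ}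
    (hm : m < 2 ^ q) (hm' : m' < 2 ^ q) :
    P ({ω | Int.fract (G x ω + G y ω + 1 / 2 ^ (q + 1)) = iota q m}
        ∩ {ω | Int.fract (G x ω + G z ω + 1 / 2 ^ (q + 1)) = iota q m'})
      = (1 / 2 ^ q) * (1 / 2 ^ q) := by
  set A := {ω | Int.fract (G x ω + G y ω + 1 / 2 ^ (q + 1)) = iota q m}
      ∩ {ω | Int.fract (G x ω + G z ω + 1 / 2 ^ (q + 1)) = iota q m'} with hA
  have hdec : A ∩ Bset q G = ⋃ k ∈ Finset.range (2 ^ q),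
      ((G x ⁻¹' {iota q k} ∩ G y ⁻¹' {iota q (gg q m k)}
        ∩ G z ⁻¹' {iota q (gg q m' k)}) ∩ Bset q G) := by
    ext ω
    simp only [Set.mem_inter_iff, Set.mem_iUnion, Finset.mem_range, Set.mem_preimage,
      Set.mem_singleton_iff, hA, Set.mem_setOf_eq]
    constructor
    · rintro ⟨⟨hA1, hA2⟩, hB⟩
      obtain ⟨k1, hk1, hg1⟩ := hval hB x
      obtain ⟨k2, hk2, hg2⟩ := hval hB y
      obtain ⟨k3, hk3, hg3⟩ := hval hB z
      have e1 : Int.fract (G x ω + G y ω + 1 / 2 ^ (q + 1))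
          = iota q ((k1 + k2 + 1) % 2 ^ q) := by rw [hg1, hg2]; exact fract_iota q k1 k2
      have e2 : Int.fract (G x ω + G z ω + 1 / 2 ^ (q + 1))
          = iota q ((k1 + k3 + 1) % 2 ^ q) := by rw [hg1, hg3]; exact fract_iota q k1 k3
      have hmm : (k1 + k2 + 1) % 2 ^ q = m := iota_injective q (e1.symm.trans hA1)
      have hmm' : (k1 + k3 + 1) % 2 ^ q = m' := iota_injective q (e2.symm.trans hA2)
      exact ⟨k1, hk1, ⟨⟨hg1, by rw [← gg_unique hk1 hm hk2 hmm]; exact hg2⟩,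
        by rw [← gg_unique hk1 hm' hk3 hmm']; exact hg3⟩, hB⟩
    · rintro ⟨k, hk, ⟨⟨h1, h2⟩, h3⟩, hB⟩
      exact ⟨⟨by rw [h1, h2, fract_iota, gg_spec hk hm],
        by rw [h1, h3, fract_iota, gg_spec hk hm']⟩, hB⟩
  have hd : ∀ k ∈ Finset.range (2 ^ q), ∀ k' ∈ Finset.range (2 ^ q), k ≠ k' →
      Disjoint ((G x ⁻¹' {iota q k} ∩ G y ⁻¹' {iota q (gg q m k)}
          ∩ G z ⁻¹' {iota q (gg q m' k)}) ∩ Bset q G)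
        ((G x ⁻¹' {iota q k'} ∩ G y ⁻¹' {iota q (gg q m k')}
          ∩ G z ⁻¹' {iota q (gg q m' k')}) ∩ Bset q G) := by
    intro k _ k' _ hkk'
    rw [Set.disjoint_left]
    rintro ω ⟨⟨⟨hx, _⟩, _⟩, _⟩ ⟨⟨⟨hx', _⟩, _⟩, _⟩
    exact hkk' (iota_injective q (Eq.trans (Eq.symm hx) hx'))
  have hmeas : ∀ k ∈ Finset.range (2 ^ q),
      MeasurableSet ((G x ⁻¹' {iota q k} ∩ G y ⁻¹' {iota q (gg q m k)}
        ∩ G z ⁻¹' {iota q (gg q m' k)}) ∩ Bset q G) :=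
    fun k _ => (((hGmeas x (measurableSet_singleton _)).inter
      (hGmeas y (measurableSet_singleton _))).inter
      (hGmeas z (measurableSet_singleton _))).inter (hBmeas hGmeas)
  rw [← hPB hGmeas hunif' A, hdec, measure_biUnion_finset hd hmeas,
    Finset.sum_congr rfl (fun k hk => by
      rw [hPB hGmeas hunif', triple hindep hxy hxz hyz,
        hunif' x k (Finset.mem_range.1 hk), hunif' y _ (gg_lt q m k),
        hunif' z _ (gg_lt q m' k)]),
    Finset.sum_const, Finset.card_range, nsmul_eq_mul, Nat.cast_pow, Nat.cast_ofNat]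
  calc (2:ℝ≥0∞) ^ q * (1 / 2 ^ q * (1 / 2 ^ q) * (1 / 2 ^ q))
      = (2 ^ q * (1 / 2 ^ q)) * (1 / 2 ^ q * (1 / 2 ^ q)) := by ring
    _ = 1 / 2 ^ q * (1 / 2 ^ q) := by rw [hNc, one_mul]

include hGmeas hunif' hindep in
lemma core4 {x y z w : ι} (hxy : x ≠ y) (hxz : x ≠ z) (hxw : x ≠ w) (hyz : y ≠ z)
    (hyw : y ≠ w) (hzw : z ≠ w) {m m' : ℕ} (hm : m < 2 ^ q) (hm' : m' < 2 ^ q) :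
    P ({ω | Int.fract (G x ω + G y ω + 1 / 2 ^ (q + 1)) = iota q m}
        ∩ {ω | Int.fract (G z ω + G w ω + 1 / 2 ^ (q + 1)) = iota q m'})
      = (1 / 2 ^ q) * (1 / 2 ^ q) := by
  set A := {ω | Int.fract (G x ω + G y ω + 1 / 2 ^ (q + 1)) = iota q m}
      ∩ {ω | Int.fract (G z ω + G w ω + 1 / 2 ^ (q + 1)) = iota q m'} with hA
  set f : ℕ × ℕ → Set Ω := fun kk =>
    (G x ⁻¹' {iota q kk.1} ∩ G y ⁻¹' {iota q (gg q m kk.1)}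
      ∩ G z ⁻¹' {iota q kk.2} ∩ G w ⁻¹' {iota q (gg q m' kk.2)}) ∩ Bset q G with hf
  have hdec : A ∩ Bset q G
      = ⋃ kk ∈ Finset.range (2 ^ q) ×ˢ Finset.range (2 ^ q), f kk := by
    ext ω
    simp only [Set.mem_inter_iff, Set.mem_iUnion, Finset.mem_product, Finset.mem_range,
      Set.mem_preimage, Set.mem_singleton_iff, hA, hf, Set.mem_setOf_eq, Prod.exists]
    constructor
    · rintro ⟨⟨hA1, hA2⟩, hB⟩
      obtain ⟨k1, hk1, hg1⟩ := hval hB x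
      obtain ⟨k2, hk2, hg2⟩ := hval hB y
      obtain ⟨k3, hk3, hg3⟩ := hval hB z
      obtain ⟨k4, hk4, hg4⟩ := hval hB w
      have e1 : Int.fract (G x ω + G y ω + 1 / 2 ^ (q + 1))
          = iota q ((k1 + k2 + 1) % 2 ^ q) := by rw [hg1, hg2]; exact fract_iota q k1 k2
      have e2 : Int.fract (G z ω + G w ω + 1 / 2 ^ (q + 1))
          = iota q ((k3 + k4 + 1) % 2 ^ q) := by rw [hg3, hg4]; exact fract_iota q k3 k4
      have hmm : (k1 + k2 + 1) % 2 ^ q = m := iota_injective q (e1.symm.trans hA1)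
      have hmm' : (k3 + k4 + 1) % 2 ^ q = m' := iota_injective q (e2.symm.trans hA2)
      exact ⟨k1, k3, ⟨hk1, hk3⟩, ⟨⟨⟨hg1, by rw [← gg_unique hk1 hm hk2 hmm]; exact hg2⟩,
        hg3⟩, by rw [← gg_unique hk3 hm' hk4 hmm']; exact hg4⟩, hB⟩
    · rintro ⟨k1, k3, ⟨hk1, hk3⟩, ⟨⟨⟨h1, h2⟩, h3⟩, h4⟩, hB⟩
      exact ⟨⟨by rw [h1, h2, fract_iota, gg_spec hk1 hm],
        by rw [h3, h4, fract_iota, gg_spec hk3 hm']⟩, hB⟩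
  have hd : ∀ kk ∈ Finset.range (2 ^ q) ×ˢ Finset.range (2 ^ q),
      ∀ kk' ∈ Finset.range (2 ^ q) ×ˢ Finset.range (2 ^ q), kk ≠ kk' →
      Disjoint (f kk) (f kk') := by
    intro kk _ kk' _ hkk'
    rw [Set.disjoint_left]
    simp only [hf]
    rintro ω ⟨⟨⟨⟨hx, _⟩, hz⟩, _⟩, _⟩ ⟨⟨⟨⟨hx', _⟩, hz'⟩, _⟩, _⟩
    refine hkk' (Prod.ext (iota_injective q (Eq.trans (Eq.symm hx) hx'))
      (iota_injective q (Eq.trans (Eq.symm hz) hz')))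
  have hmeas : ∀ kk ∈ Finset.range (2 ^ q) ×ˢ Finset.range (2 ^ q),
      MeasurableSet (f kk) :=
    fun kk _ => ((((hGmeas x (measurableSet_singleton _)).inter
      (hGmeas y (measurableSet_singleton _))).inter
      (hGmeas z (measurableSet_singleton _))).inter
      (hGmeas w (measurableSet_singleton _))).inter (hBmeas hGmeas)
  have hterm : ∀ kk ∈ Finset.range (2 ^ q) ×ˢ Finset.range (2 ^ q),
      P (f kk) = 1 / 2 ^ q * (1 / 2 ^ q) * (1 / 2 ^ q) * (1 / 2 ^ q) := by
    intro kk hkk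
    have hkk' := Finset.mem_product.1 hkk
    simp only [hf]
    rw [hPB hGmeas hunif', quad hindep hxy hxz hxw hyz hyw hzw,
      hunif' x _ (Finset.mem_range.1 hkk'.1), hunif' y _ (gg_lt q m kk.1),
      hunif' z _ (Finset.mem_range.1 hkk'.2), hunif' w _ (gg_lt q m' kk.2)]
  rw [← hPB hGmeas hunif' A, hdec, measure_biUnion_finset hd hmeas,
    Finset.sum_congr rfl hterm,
    Finset.sum_const, Finset.card_product, Finset.card_range, nsmul_eq_mul,
    Nat.cast_mul, Nat.cast_pow, Nat.cast_ofNat]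
  calc ((2:ℝ≥0∞) ^ q * 2 ^ q) * (1 / 2 ^ q * (1 / 2 ^ q) * (1 / 2 ^ q) * (1 / 2 ^ q))
      = (2 ^ q * (1 / 2 ^ q)) * (2 ^ q * (1 / 2 ^ q)) * (1 / 2 ^ q * (1 / 2 ^ q)) := by
        ring
    _ = 1 / 2 ^ q * (1 / 2 ^ q) := by rw [hNc, one_mul, one_mul]


end prob2

end Bakh

/-- Bakhvalov's trick: from an independent family `(G_j)_{j=1,…,2n}`, each uniform on
`D^(q)`, the family `H_{(j1,j2)} = G_{j1} + G_{j2+n} + 2^{-(q+1)} mod 1`, for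
`j1, j2 ∈ {1,…,n}`, is pairwise independent with each member uniform on `D^(q)`. -/
theorem stmt_2 {Ω : Type*} [MeasurableSpace Ω] (P : MeasureTheory.Measure Ω)
    [MeasureTheory.IsProbabilityMeasure P] (q n : ℕ)
    (G : Fin (2 * n) → Ω → ℝ) (hGmeas : ∀ j, Measurable (G j))
    (hindep : iIndepFun (m := fun _ => (inferInstance : MeasurableSpace ℝ)) G P)
    (hunif : ∀ j, ∀ d ∈ Dq q, P {ω | G j ω = d} = 1 / 2 ^ q)
    (H : Fin n × Fin n → Ω → ℝ)
    (hH : ∀ p : Fin n × Fin n, ∀ ω,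
      H p ω = Int.fract (G ⟨p.1, by omega⟩ ω + G ⟨p.2 + n, by omega⟩ ω + 1 / 2 ^ (q + 1))) :
    (∀ p p' : Fin n × Fin n, p ≠ p' → IndepFun (H p) (H p') P) ∧
      (∀ p : Fin n × Fin n, ∀ d ∈ Dq q, P {ω | H p ω = d} = 1 / 2 ^ q) := by
  classical
  have hpos : 0 < 2 ^ q := Nat.pow_pos (by norm_num)
  have hunif' : ∀ (j : Fin (2 * n)) (k : ℕ), k < 2 ^ q →
      P (G j ⁻¹' {Bakh.iota q k}) = 1 / 2 ^ q :=
    fun j k hk => hunif j _ (Bakh.iota_mem_Dq hk)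
  have Hmeas : ∀ p, Measurable (H p) := by
    intro p
    have he : H p = fun ω => Int.fract (G ⟨p.1, by omega⟩ ω + G ⟨p.2 + n, by omega⟩ ω
        + 1 / 2 ^ (q + 1)) := funext (hH p)
    rw [he]
    exact (((hGmeas _).add (hGmeas _)).add measurable_const).fract
  have hHmem : ∀ (p : Fin n × Fin n) (ω : Ω), ω ∈ Bakh.Bset q G →
      ∃ m, m < 2 ^ q ∧ H p ω = Bakh.iota q m := by
    intro p ω hB
    obtain ⟨k1, hk1, h1⟩ := Bakh.hval hB (⟨p.1, by omega⟩ : Fin (2 * n))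
    obtain ⟨k2, hk2, h2⟩ := Bakh.hval hB (⟨p.2 + n, by omega⟩ : Fin (2 * n))
    exact ⟨(k1 + k2 + 1) % 2 ^ q, Nat.mod_lt _ hpos,
      by rw [hH p ω, h1, h2]; exact Bakh.fract_iota q k1 k2⟩
  have hEp : ∀ (r : Fin n × Fin n) (d : ℝ), {ω | H r ω = d}
      = {ω | Int.fract (G ⟨r.1, by omega⟩ ω + G ⟨r.2 + n, by omega⟩ ω
          + 1 / 2 ^ (q + 1)) = d} :=
    fun r d => Set.ext fun ω => by simp only [Set.mem_setOf_eq]; rw [hH r ω]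
  have hHpoint : ∀ (p : Fin n × Fin n) (m : ℕ), m < 2 ^ q →
      P {ω | H p ω = Bakh.iota q m} = 1 / 2 ^ q := by
    intro p m hm
    rw [hEp p]
    exact Bakh.core1 hGmeas hunif' hindep
      (x := ⟨p.1, by omega⟩) (y := ⟨p.2 + n, by omega⟩)
      (Fin.ne_of_val_ne (by have := p.1.isLt; simp; omega)) hm
  have hcomm : ∀ (u v : Fin (2 * n)) (d : ℝ),
      {ω | Int.fract (G u ω + G v ω + 1 / 2 ^ (q + 1)) = d}
        = {ω | Int.fract (G v ω + G u ω + 1 / 2 ^ (q + 1)) = d} :=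
    fun u v d => Set.ext fun ω => by simp only [Set.mem_setOf_eq]; rw [add_comm (G u ω)]
  have hHjoint : ∀ p p' : Fin n × Fin n, p ≠ p' → ∀ m m' : ℕ, m < 2 ^ q → m' < 2 ^ q →
      P ({ω | H p ω = Bakh.iota q m} ∩ {ω | H p' ω = Bakh.iota q m'})
        = 1 / 2 ^ q * (1 / 2 ^ q) := by
    rintro ⟨p1, p2⟩ ⟨p1', p2'⟩ hp m m' hm hm'
    have hb1 := p1.isLt
    have hb2 := p2.isLt
    have hb1' := p1'.isLt
    have hb2' := p2'.isLt
    rw [hEp, hEp]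
    by_cases h1 : p1 = p1'
    · subst h1
      have h2 : p2 ≠ p2' := fun h => hp (by rw [h])
      have hv2 : (p2 : ℕ) ≠ (p2' : ℕ) := fun hv => h2 (Fin.ext hv)
      exact Bakh.core2 hGmeas hunif' hindep
        (x := ⟨p1, by omega⟩) (y := ⟨p2 + n, by omega⟩) (z := ⟨p2' + n, by omega⟩)
        (Fin.ne_of_val_ne (by simp; omega)) (Fin.ne_of_val_ne (by simp; omega))
        (Fin.ne_of_val_ne (by simp; omega)) hm hm'
    · have hv1 : (p1 : ℕ) ≠ (p1' : ℕ) := fun hv => h1 (Fin.ext hv)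
      by_cases h2 : p2 = p2'
      · subst h2
        rw [hcomm ⟨p1, by omega⟩ ⟨p2 + n, by omega⟩ (Bakh.iota q m),
          hcomm ⟨p1', by omega⟩ ⟨p2 + n, by omega⟩ (Bakh.iota q m')]
        exact Bakh.core2 hGmeas hunif' hindep
          (x := ⟨p2 + n, by omega⟩) (y := ⟨p1, by omega⟩) (z := ⟨p1', by omega⟩)
          (Fin.ne_of_val_ne (by simp; omega)) (Fin.ne_of_val_ne (by simp; omega))
          (Fin.ne_of_val_ne (by simp; omega)) hm hm'
      · have hv2 : (p2 : ℕ) ≠ (p2' : ℕ) := fun hv => h2 (Fin.ext hv)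
        exact Bakh.core4 hGmeas hunif' hindep
          (x := ⟨p1, by omega⟩) (y := ⟨p2 + n, by omega⟩)
          (z := ⟨p1', by omega⟩) (w := ⟨p2' + n, by omega⟩)
          (Fin.ne_of_val_ne (by simp; omega)) (Fin.ne_of_val_ne (by simp; omega))
          (Fin.ne_of_val_ne (by simp; omega)) (Fin.ne_of_val_ne (by simp; omega))
          (Fin.ne_of_val_ne (by simp; omega)) (Fin.ne_of_val_ne (by simp; omega)) hm hm'
  have hBm : MeasurableSet (Bakh.Bset q G) := Bakh.hBmeas hGmeas
  have hPBm := Bakh.hPB (P := P) hGmeas hunif'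
  constructor
  · intro p p' hp
    rw [ProbabilityTheory.indepFun_iff_measure_inter_preimage_eq_mul]
    intro s t _ _
    set F : Set ℝ → Finset ℕ :=
      fun s => (Finset.range (2 ^ q)).filter (fun m => Bakh.iota q m ∈ s) with hF
    have hP1 : ∀ (r : Fin n × Fin n) (s : Set ℝ),
        P (H r ⁻¹' s) = (F s).card * (1 / 2 ^ q) := by
      intro r s
      have hdec : H r ⁻¹' s ∩ Bakh.Bset q G
          = ⋃ m ∈ F s, ({ω | H r ω = Bakh.iota q m} ∩ Bakh.Bset q G) := by
        ext ω
        simp only [Set.mem_inter_iff, Set.mem_iUnion, Set.mem_preimage, hF,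
          Finset.mem_filter, Finset.mem_range, Set.mem_setOf_eq]
        constructor
        · rintro ⟨hs, hB⟩
          obtain ⟨m, hm, he⟩ := hHmem r ω hB
          exact ⟨m, ⟨hm, he ▸ hs⟩, he, hB⟩
        · rintro ⟨m, ⟨hm, hms⟩, he, hB⟩
          exact ⟨by rw [he]; exact hms, hB⟩
      have hd : ∀ m ∈ F s, ∀ m' ∈ F s, m ≠ m' →
          Disjoint ({ω | H r ω = Bakh.iota q m} ∩ Bakh.Bset q G)
            ({ω | H r ω = Bakh.iota q m'} ∩ Bakh.Bset q G) := by
        intro m _ m' _ hmm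
        rw [Set.disjoint_left]
        rintro ω ⟨he, _⟩ ⟨he', _⟩
        exact hmm (Bakh.iota_injective q (Eq.trans (Eq.symm he) he'))
      have hme : ∀ m ∈ F s,
          MeasurableSet ({ω | H r ω = Bakh.iota q m} ∩ Bakh.Bset q G) :=
        fun m _ => (Hmeas r (measurableSet_singleton _)).inter hBm
      rw [← hPBm (H r ⁻¹' s), hdec, measure_biUnion_finset hd hme,
        Finset.sum_congr rfl (fun m hm => by
          rw [hPBm, hHpoint r m (Finset.mem_range.1 (Finset.mem_filter.1 hm).1)]),
        Finset.sum_const, nsmul_eq_mul]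
    have hdec2 : H p ⁻¹' s ∩ H p' ⁻¹' t ∩ Bakh.Bset q G
        = ⋃ mm ∈ F s ×ˢ F t, ({ω | H p ω = Bakh.iota q mm.1}
            ∩ {ω | H p' ω = Bakh.iota q mm.2} ∩ Bakh.Bset q G) := by
      ext ω
      simp only [Set.mem_inter_iff, Set.mem_iUnion, Set.mem_preimage, hF,
        Finset.mem_product, Finset.mem_filter, Finset.mem_range, Set.mem_setOf_eq,
        Prod.exists]
      constructor
      · rintro ⟨⟨hs, ht⟩, hB⟩
        obtain ⟨m, hm, he⟩ := hHmem p ω hB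
        obtain ⟨m', hm', he'⟩ := hHmem p' ω hB
        exact ⟨m, m', ⟨⟨hm, he ▸ hs⟩, ⟨hm', he' ▸ ht⟩⟩, ⟨he, he'⟩, hB⟩
      · rintro ⟨m, m', ⟨⟨hm, hms⟩, hm', hmt⟩, ⟨he, he'⟩, hB⟩
        exact ⟨⟨by rw [he]; exact hms, by rw [he']; exact hmt⟩, hB⟩
    have hd2 : ∀ mm ∈ F s ×ˢ F t, ∀ mm' ∈ F s ×ˢ F t, mm ≠ mm' →
        Disjoint ({ω | H p ω = Bakh.iota q mm.1}
            ∩ {ω | H p' ω = Bakh.iota q mm.2} ∩ Bakh.Bset q G)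
          ({ω | H p ω = Bakh.iota q mm'.1}
            ∩ {ω | H p' ω = Bakh.iota q mm'.2} ∩ Bakh.Bset q G) := by
      intro mm _ mm' _ hne
      rw [Set.disjoint_left]
      rintro ω ⟨⟨he1, he2⟩, _⟩ ⟨⟨he1', he2'⟩, _⟩
      exact hne (Prod.ext (Bakh.iota_injective q (Eq.trans (Eq.symm he1) he1'))
        (Bakh.iota_injective q (Eq.trans (Eq.symm he2) he2')))
    have hme2 : ∀ mm ∈ F s ×ˢ F t,
        MeasurableSet ({ω | H p ω = Bakh.iota q mm.1}
          ∩ {ω | H p' ω = Bakh.iota q mm.2} ∩ Bakh.Bset q G) :=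
      fun mm _ => ((Hmeas p (measurableSet_singleton _)).inter
        (Hmeas p' (measurableSet_singleton _))).inter hBm
    have hP2 : P (H p ⁻¹' s ∩ H p' ⁻¹' t)
        = ((F s).card * (F t).card : ℕ) * (1 / 2 ^ q * (1 / 2 ^ q)) := by
      rw [← hPBm (H p ⁻¹' s ∩ H p' ⁻¹' t), hdec2, measure_biUnion_finset hd2 hme2,
        Finset.sum_congr rfl (fun mm hmm => by
          have h := Finset.mem_product.1 hmm
          rw [hPBm, hHjoint p p' hp _ _
            (Finset.mem_range.1 (Finset.mem_filter.1 h.1).1)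
            (Finset.mem_range.1 (Finset.mem_filter.1 h.2).1)]),
        Finset.sum_const, Finset.card_product, nsmul_eq_mul]
    rw [hP2, hP1 p s, hP1 p' t, Nat.cast_mul]
    ring
  · intro p d hd
    obtain ⟨m, hm, rfl⟩ := Bakh.mem_Dq_iff.1 hd
    exact hHpoint p m hm
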